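/- Let 𝔅_{ab}, 𝔅_{ba}, 𝔅_{bb} be real numbers with 𝔅_{ab} ≠ 0, let μ be a nonzero real number, and assume −𝔅_{bb}² − 𝔅_{ab}·𝔅_{ba} = μ^{−2}. Set e_a = 1/(2i) and e_b = (−i·𝔅_{bb} − 1)/(2·𝔅_{ab}). Then e_a·𝔅_{ba} + e_b·(𝔅_{bb} + i) = i(1 − μ²)/(2μ²·𝔅_{ab}). Consequently, if (μ_n) is a sequence of nonzero reals with μ_n → 1 and the corresponding real numbers 𝔅_{ab,n} satisfy |𝔅_{ab,n}| ≥ δ for some fixed δ > 0, then the corresponding quantities e_{a,n}·𝔅_{ba,n} + e_{b,n}·(𝔅_{bb,n} + i) tend to 0. -/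

import Mathlib

open Complex Filter

lemma key3 (Bab Bba Bbb : ℝ) (hBab : Bab ≠ 0) (μ : ℝ) (hμ : μ ≠ 0)
    (hdet : -Bbb ^ 2 - Bab * Bba = (μ ^ 2)⁻¹) :
    (1 / (2 * Complex.I)) * (Bba : ℂ)
        + ((-Complex.I * (Bbb : ℂ) - 1) / (2 * (Bab : ℂ))) * ((Bbb : ℂ) + Complex.I)
      = Complex.I * (1 - (μ : ℂ) ^ 2) / (2 * (μ : ℂ) ^ 2 * (Bab : ℂ)) := by
  have hBab' : (Bab : ℂ) ≠ 0 := by exact_mod_cast hBab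
  have hμ' : (μ : ℂ) ≠ 0 := by exact_mod_cast hμ
  have hc : -(Bbb : ℂ) ^ 2 - (Bab : ℂ) * (Bba : ℂ) = (((μ : ℂ)) ^ 2)⁻¹ := by
    exact_mod_cast hdet
  have hμ2 : ((μ : ℂ)) ^ 2 ≠ 0 := pow_ne_zero _ hμ'
  have hc' : (-(Bbb : ℂ) ^ 2 - (Bab : ℂ) * (Bba : ℂ)) * (μ : ℂ) ^ 2 = 1 := by
    rw [hc]; field_simp
  field_simp
  linear_combination (-1 : ℂ) * hc' + (-((Bbb:ℂ)*Complex.I + (Bbb:ℂ)^2 + 1)*(μ:ℂ)^2 - (1 - (μ:ℂ)^2)) * Complex.I_sq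

theorem stmt3 (Bab Bba Bbb : ℝ) (hBab : Bab ≠ 0) (μ : ℝ) (hμ : μ ≠ 0)
    (hdet : -Bbb ^ 2 - Bab * Bba = (μ ^ 2)⁻¹) :
    ((1 / (2 * Complex.I)) * (Bba : ℂ)
        + ((-Complex.I * (Bbb : ℂ) - 1) / (2 * (Bab : ℂ))) * ((Bbb : ℂ) + Complex.I)
      = Complex.I * (1 - (μ : ℂ) ^ 2) / (2 * (μ : ℂ) ^ 2 * (Bab : ℂ)))
    ∧ ∀ (μs Babs Bbas Bbbs : ℕ → ℝ) (δ : ℝ), 0 < δ →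
        (∀ n, μs n ≠ 0) →
        Tendsto μs atTop (nhds 1) →
        (∀ n, δ ≤ |Babs n|) →
        (∀ n, -(Bbbs n) ^ 2 - Babs n * Bbas n = ((μs n) ^ 2)⁻¹) →
        Tendsto (fun n =>
            (1 / (2 * Complex.I)) * (Bbas n : ℂ)
              + ((-Complex.I * (Bbbs n : ℂ) - 1) / (2 * (Babs n : ℂ)))
                * ((Bbbs n : ℂ) + Complex.I))
          atTop (nhds 0) := by
  refine ⟨key3 Bab Bba Bbb hBab μ hμ hdet, ?_⟩
  intro μs Babs Bbas Bbbs δ hδ hμs hμlim hBabs hdets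
  have hBab0 : ∀ n, Babs n ≠ 0 := fun n => by
    intro h; have := hBabs n; rw [h, abs_zero] at this; linarith
  have heq : ∀ n, (1 / (2 * Complex.I)) * (Bbas n : ℂ)
      + ((-Complex.I * (Bbbs n : ℂ) - 1) / (2 * (Babs n : ℂ))) * ((Bbbs n : ℂ) + Complex.I)
      = Complex.I * (1 - (μs n : ℂ) ^ 2) / (2 * (μs n : ℂ) ^ 2 * (Babs n : ℂ)) :=
    fun n => key3 _ _ _ (hBab0 n) _ (hμs n) (hdets n)
  simp only [heq]
  -- bound norms
  rw [tendsto_zero_iff_norm_tendsto_zero]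
  have hg : Tendsto (fun n => |1 - (μs n) ^ 2| / (2 * (μs n) ^ 2 * δ)) atTop (nhds 0) := by
    have h1 : Tendsto (fun n => |1 - (μs n) ^ 2|) atTop (nhds 0) := by
      have : Tendsto (fun n => 1 - (μs n) ^ 2) atTop (nhds 0) := by
        have := ((hμlim.pow 2).const_sub 1)
        simpa using this
      simpa using this.abs
    have h2 : Tendsto (fun n => 2 * (μs n) ^ 2 * δ) atTop (nhds (2 * 1 * δ)) := by
      simpa using (((hμlim.pow 2).const_mul 2).mul_const δ)
    have := h1.div h2 (by norm_num; linarith)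
    rw [zero_div] at this; exact this
  apply squeeze_zero (fun n => norm_nonneg _) _ hg
  intro n
  have hμ2pos : 0 < (μs n) ^ 2 := lt_of_le_of_ne (sq_nonneg _) (Ne.symm (pow_ne_zero 2 (hμs n)))
  have habs : ‖Complex.I * (1 - (μs n : ℂ) ^ 2) / (2 * (μs n : ℂ) ^ 2 * (Babs n : ℂ))‖
      = |1 - (μs n) ^ 2| / (2 * (μs n) ^ 2 * |Babs n|) := by
    rw [norm_div, norm_mul, norm_mul, norm_mul]
    push_cast
    rw [Complex.norm_I, one_mul]
    rw [show (1 : ℂ) - (μs n : ℂ) ^ 2 = ((1 - (μs n) ^ 2 : ℝ) : ℂ) by push_cast; ring]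
    rw [show ((μs n : ℂ)) ^ 2 = (((μs n) ^ 2 : ℝ) : ℂ) by push_cast; ring]
    simp [Complex.norm_real, abs_of_pos hμ2pos]
    rw [show ((1:ℂ) - (μs n:ℂ)^2) = ((1 - μs n ^2 : ℝ):ℂ) by push_cast; ring, Complex.norm_real, Real.norm_eq_abs]
  rw [habs]
  apply div_le_div_of_nonneg_left (abs_nonneg _)
  · positivity
  · have := hBabs n
    nlinarith [hμ2pos]
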